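/- arXiv:2508.05103 — 5 statements merged into one kernel-verified Lean document; each statement's English description precedes it below -/
import Mathlib

section
/- For integers m ≥ 1 and p ≥ 1, the number W(m,p) of words of length 2p over an alphabet of m letters in which every letter appears an even number of times satisfies W(m,p) ≤ 2^p · m^p · p!. -/
open Finset

def Wset (m n : ℕ) : Finset (Fin n → Fin m) :=
  Finset.univ.filter (fun w =>
    ∀ a : Fin m, Even (Finset.univ.filter (fun i => w i = a)).card)

def gmap (p : ℕ) (j : Fin (2*p+2)) (i : Fin (2*p)) : Fin (2*p+2) :=
  if i.val + 1 < j.val then ⟨i.val+1, by have := i.isLt; omega⟩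
  else ⟨i.val+2, by have := i.isLt; omega⟩

lemma gmap_inj (p : ℕ) (j : Fin (2*p+2)) : Function.Injective (gmap p j) := by
  intro a b h
  unfold gmap at h
  apply Fin.ext
  split at h <;> split at h <;> simp_all [Fin.ext_iff] <;> omega

lemma gmap_ne_zero (p : ℕ) (j : Fin (2*p+2)) (i : Fin (2*p)) : (gmap p j i).val ≠ 0 := by
  unfold gmap; split <;> simp

lemma gmap_ne_j (p : ℕ) (j : Fin (2*p+2)) (i : Fin (2*p)) : gmap p j i ≠ j := by
  unfold gmap
  split <;> simp [Fin.ext_iff] <;> omega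

lemma gmap_surj (p : ℕ) (j : Fin (2*p+2)) (hj : j.val ≠ 0) (k : Fin (2*p+2))
    (hk0 : k.val ≠ 0) (hkj : k ≠ j) : ∃ i, gmap p j i = k := by
  have hkj' : k.val ≠ j.val := fun h => hkj (Fin.ext h)
  have hk := k.isLt
  have hjlt := j.isLt
  by_cases h : k.val < j.val
  · exact ⟨⟨k.val - 1, by omega⟩, by unfold gmap; rw [if_pos (by simp; omega)]; exact Fin.ext (by simp; omega)⟩
  · exact ⟨⟨k.val - 2, by omega⟩, by unfold gmap; rw [if_neg (by simp; omega)]; exact Fin.ext (by simp; omega)⟩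

lemma count_split (m p : ℕ) (j : Fin (2*p+2)) (hj : j.val ≠ 0)
    (w : Fin (2*p+2) → Fin m) (b : Fin m) :
    (Finset.univ.filter fun k => w k = b) =
      ((Finset.univ.filter fun i : Fin (2*p) => w (gmap p j i) = b).image (gmap p j)) ∪
        (({0, j} : Finset (Fin (2*p+2))).filter fun k => w k = b) := by
  ext k
  simp only [mem_union, mem_image, mem_filter, mem_univ, true_and, mem_insert, mem_singleton]
  constructor
  · intro hk
    by_cases h0 : k.val = 0
    · exact Or.inr ⟨Or.inl (Fin.ext h0), hk⟩
    by_cases hkj : k = j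
    · exact Or.inr ⟨Or.inr hkj, hk⟩
    obtain ⟨i, hi⟩ := gmap_surj p j hj k h0 hkj
    exact Or.inl ⟨i, by rw [hi]; exact hk, hi⟩
  · rintro (⟨i, hi, rfl⟩ | ⟨_, hk⟩)
    · exact hi
    · exact hk

lemma card_split (m p : ℕ) (j : Fin (2*p+2)) (hj : j.val ≠ 0)
    (w : Fin (2*p+2) → Fin m) (b : Fin m) :
    (Finset.univ.filter fun k => w k = b).card =
      (Finset.univ.filter fun i : Fin (2*p) => w (gmap p j i) = b).card +
        (({0, j} : Finset (Fin (2*p+2))).filter fun k => w k = b).card := by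
  rw [count_split m p j hj w b, Finset.card_union_of_disjoint, Finset.card_image_of_injective _ (gmap_inj p j)]
  · rw [Finset.disjoint_left]
    rintro x hx hx'
    simp only [mem_image, mem_filter, mem_insert, mem_singleton] at hx hx'
    obtain ⟨i, _, rfl⟩ := hx
    rcases hx'.1 with h | h
    · exact gmap_ne_zero p j i (by rw [h]; rfl)
    · exact gmap_ne_j p j i h

lemma pair_card_even (m p : ℕ) (j : Fin (2*p+2)) (hj : j.val ≠ 0)
    (w : Fin (2*p+2) → Fin m) (hw0 : w j = w 0) (b : Fin m) :
    Even (({0, j} : Finset (Fin (2*p+2))).filter fun k => w k = b).card := by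
  have h0j : (0 : Fin (2*p+2)) ≠ j := fun h => hj (by rw [← h]; rfl)
  by_cases hb : w 0 = b
  · have : (({0, j} : Finset (Fin (2*p+2))).filter fun k => w k = b) = {0, j} := by
      apply Finset.filter_true_of_mem
      intro x hx
      simp only [mem_insert, mem_singleton] at hx
      rcases hx with rfl | rfl
      · exact hb
      · rw [hw0]; exact hb
    rw [this, Finset.card_insert_of_notMem (by simpa using h0j), Finset.card_singleton]
    exact ⟨1, rfl⟩
  · have : (({0, j} : Finset (Fin (2*p+2))).filter fun k => w k = b) = ∅ := by
      apply Finset.filter_false_of_mem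
      intro x hx
      simp only [mem_insert, mem_singleton] at hx
      rcases hx with rfl | rfl
      · exact hb
      · rw [hw0]; exact hb
    rw [this]; exact ⟨0, rfl⟩

lemma second_occ (m p : ℕ) (w : Fin (2*p+2) → Fin m)
    (hw : ∀ a : Fin m, Even (Finset.univ.filter (fun i => w i = a)).card) :
    (Finset.univ.filter (fun i : Fin (2*p+2) => w i = w 0 ∧ i ≠ 0)).Nonempty := by
  set s : Finset (Fin (2*p+2)) := Finset.univ.filter (fun i => w i = w 0) with hs
  have h0 : (0 : Fin (2*p+2)) ∈ s := by simp [hs]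
  have heven : Even s.card := hw (w 0)
  have hcard : 2 ≤ s.card := by
    rcases heven with ⟨c, hc⟩
    have h1 : 1 ≤ s.card := Finset.card_pos.2 ⟨0, h0⟩
    omega
  have : Finset.univ.filter (fun i : Fin (2*p+2) => w i = w 0 ∧ i ≠ 0) = s.erase 0 := by
    ext k
    simp [hs, Finset.mem_erase, and_comm]
  rw [this]
  rw [← Finset.card_pos, Finset.card_erase_of_mem h0]
  omega

noncomputable def encode (m p : ℕ) (hm : 1 ≤ m) (w : Fin (2*p+2) → Fin m) :
    Fin (2*p+2) × Fin m × (Fin (2*p) → Fin m) :=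
  if h : (Finset.univ.filter (fun i : Fin (2*p+2) => w i = w 0 ∧ i ≠ 0)).Nonempty
  then ((Finset.univ.filter (fun i : Fin (2*p+2) => w i = w 0 ∧ i ≠ 0)).min' h, w 0,
    fun i => w (gmap p ((Finset.univ.filter
      (fun i : Fin (2*p+2) => w i = w 0 ∧ i ≠ 0)).min' h) i))
  else (⟨0, by omega⟩, ⟨0, hm⟩, fun _ => ⟨0, hm⟩)

lemma step (m p : ℕ) (hm : 1 ≤ m) :
    (Wset m (2*p+2)).card ≤ (2*p+2) * (m * (Wset m (2*p)).card) := by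
  classical
  have hcardT : (Finset.univ ×ˢ Finset.univ ×ˢ Wset m (2*p) :
      Finset (Fin (2*p+2) × Fin m × (Fin (2*p) → Fin m))).card
      = (2*p+2) * (m * (Wset m (2*p)).card) := by
    simp [Finset.card_product]
  rw [← hcardT]
  apply Finset.card_le_card_of_injOn (encode m p hm)
  · intro w hw
    have hw' : ∀ a : Fin m, Even (Finset.univ.filter (fun i => w i = a)).card := by
      simpa [Wset] using hw
    have hne := second_occ m p w hw'
    unfold encode
    simp only [dif_pos hne]
    set j := (Finset.univ.filter (fun i : Fin (2*p+2) => w i = w 0 ∧ i ≠ 0)).min' hne with hjdef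
    have hjmem := Finset.min'_mem _ hne
    rw [Finset.mem_filter] at hjmem
    have hwj : w j = w 0 := hjmem.2.1
    have hj0 : j.val ≠ 0 := fun h => hjmem.2.2 (Fin.ext h)
    simp only [Finset.mem_coe, Finset.mem_product, Finset.mem_univ, true_and]
    simp only [Wset, Finset.mem_filter, Finset.mem_univ, true_and]
    intro b
    have hsplit := card_split m p j hj0 w b
    have hbig := hw' b
    have hpair := pair_card_even m p j hj0 w hwj b
    rw [hsplit, Nat.even_add] at hbig
    exact hbig.2 hpair
  · intro w1 h1 w2 h2 heq
    have hw1 : ∀ a : Fin m, Even (Finset.univ.filter (fun i => w1 i = a)).card := by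
      simpa [Wset] using h1
    have hw2 : ∀ a : Fin m, Even (Finset.univ.filter (fun i => w2 i = a)).card := by
      simpa [Wset] using h2
    have hne1 := second_occ m p w1 hw1
    have hne2 := second_occ m p w2 hw2
    unfold encode at heq
    simp only [dif_pos hne1, dif_pos hne2, Prod.mk.injEq] at heq
    obtain ⟨hj, ha, hf⟩ := heq
    set j := (Finset.univ.filter (fun i : Fin (2*p+2) => w1 i = w1 0 ∧ i ≠ 0)).min' hne1 with hjdef
    have hjmem := Finset.min'_mem _ hne1
    rw [Finset.mem_filter] at hjmem
    have hj2mem := Finset.min'_mem _ hne2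
    rw [Finset.mem_filter] at hj2mem
    have hj0 : j.val ≠ 0 := fun h => hjmem.2.2 (Fin.ext h)
    funext k
    by_cases hk0 : k.val = 0
    · have : k = 0 := Fin.ext hk0
      rw [this]; exact ha
    by_cases hkj : k = j
    · rw [hkj, hjmem.2.1, ha, ← hj2mem.2.1, ← hj]
    · obtain ⟨i, hi⟩ := gmap_surj p j hj0 k hk0 hkj
      have := congrFun hf i
      rw [← hj] at this
      rw [← hi]
      exact this

lemma main_aux (m : ℕ) (hm : 1 ≤ m) : ∀ p : ℕ, (Wset m (2*p)).card ≤ 2 ^ p * m ^ p * p.factorial := by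
  intro p
  induction p with
  | zero =>
      have : (Wset m (2*0)).card ≤ Fintype.card (Fin (2*0) → Fin m) :=
        Finset.card_le_univ _
      simpa using this
  | succ q ih =>
      have h2 : 2*(q+1) = 2*q+2 := by ring
      have hstep : (Wset m (2*(q+1))).card ≤ (2*q+2) * (m * (Wset m (2*q)).card) := by
        rw [h2]; exact step m q hm
      calc (Wset m (2*(q+1))).card ≤ (2*q+2) * (m * (Wset m (2*q)).card) := hstep
        _ ≤ (2*q+2) * (m * (2 ^ q * m ^ q * q.factorial)) := by
            exact Nat.mul_le_mul_left _ (Nat.mul_le_mul_left _ ih)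
        _ = 2 ^ (q+1) * m ^ (q+1) * (q+1).factorial := by
            rw [pow_succ, pow_succ, Nat.factorial_succ]; ring



/-- W(m,p) ≤ 2^p · m^p · p!, where W(m,p) counts words of length 2p over an
alphabet of m letters in which each letter appears an even number of times. -/
theorem words_even_count_le (m p : ℕ) (hm : 1 ≤ m) (hp : 1 ≤ p) :
    (Finset.univ.filter (fun w : Fin (2 * p) → Fin m =>
        ∀ a : Fin m, Even (Finset.univ.filter (fun i => w i = a)).card)).card
      ≤ 2 ^ p * m ^ p * p.factorial := by
  exact main_aux m hm p
end

section
/- For integers m ≥ 1 and p ≥ 1, the difference W(m,p) − N(m,p) between the number of words of length 2p over an alphabet of m letters with all letter-multiplicities even and the number with all nonzero letter-multiplicities equal to 2 satisfies W(m,p) − N(m,p) ≤ (4e)^p · m^{p−1} · p!. -/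
open Finset

namespace WESP

variable {n m : ℕ}

/-- positions holding letter `a` -/
def cls (w : Fin n → Fin m) (a : Fin m) : Finset (Fin n) := univ.filter (fun j => w j = a)

/-- rank of position `i` among positions with the same letter -/
def rk (w : Fin n → Fin m) (i : Fin n) : ℕ := ((cls w (w i)).filter (fun j => j < i)).card

lemma mem_cls_self (w : Fin n → Fin m) (i : Fin n) : i ∈ cls w (w i) := by simp [cls]

lemma cls_eq_of_mem {w : Fin n → Fin m} {a : Fin m} {i : Fin n} (h : i ∈ cls w a) : w i = a := by
  simpa [cls] using h

lemma rk_lt (w : Fin n → Fin m) (i : Fin n) : rk w i < (cls w (w i)).card := by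
  refine card_lt_card ?_
  rw [Finset.ssubset_def]
  refine ⟨filter_subset _ _, fun h => ?_⟩
  have := h (mem_cls_self w i)
  simp at this

lemma nonempty_lt {w : Fin n → Fin m} {i : Fin n} (h : ¬ Even (rk w i)) :
    ((cls w (w i)).filter (fun j => j < i)).Nonempty := by
  rw [← card_pos]
  have : rk w i ≠ 0 := fun h0 => h (h0 ▸ Even.zero)
  exact Nat.pos_of_ne_zero this

lemma nonempty_gt {w : Fin n → Fin m} (hE : ∀ a, Even (cls w a).card) {i : Fin n}
    (h : Even (rk w i)) : ((cls w (w i)).filter (fun j => i < j)).Nonempty := by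
  by_contra hne
  rw [not_nonempty_iff_eq_empty] at hne
  have hsub : cls w (w i) ⊆ insert i ((cls w (w i)).filter (fun j => j < i)) := by
    intro k hk
    rcases lt_trichotomy k i with h1 | h1 | h1
    · exact mem_insert_of_mem (mem_filter.mpr ⟨hk, h1⟩)
    · simp [h1]
    · exfalso
      have : k ∈ (cls w (w i)).filter (fun j => i < j) := mem_filter.mpr ⟨hk, h1⟩
      rw [hne] at this
      exact absurd this (notMem_empty k)
  have h1 : (cls w (w i)).card ≤ rk w i + 1 :=
    le_trans (card_le_card hsub) (card_insert_le _ _)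
  have h2 := rk_lt w i
  obtain ⟨r, hr⟩ := hE (w i)
  obtain ⟨s, hs⟩ := h
  omega

/-- the partner of position `i`: adjacent same-letter position in sorted order -/
def pt (w : Fin n → Fin m) (hE : ∀ a, Even (cls w a).card) (i : Fin n) : Fin n :=
  if h : Even (rk w i) then ((cls w (w i)).filter (fun j => i < j)).min' (nonempty_gt hE h)
  else ((cls w (w i)).filter (fun j => j < i)).max' (nonempty_lt h)

variable {w : Fin n → Fin m} (hE : ∀ a, Even (cls w a).card)
include hE

lemma pt_mem (i : Fin n) : pt w hE i ∈ cls w (w i) := by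
  unfold pt
  split
  · exact filter_subset _ _ (min'_mem _ _)
  · exact filter_subset _ _ (max'_mem _ _)

lemma w_pt (i : Fin n) : w (pt w hE i) = w i := cls_eq_of_mem (pt_mem hE i)

lemma lt_pt {i : Fin n} (h : Even (rk w i)) : i < pt w hE i := by
  unfold pt
  rw [dif_pos h]
  exact (mem_filter.mp (min'_mem _ _)).2

lemma pt_lt {i : Fin n} (h : ¬ Even (rk w i)) : pt w hE i < i := by
  unfold pt
  rw [dif_neg h]
  have := max'_mem ((cls w (w i)).filter (fun j => j < i)) (nonempty_lt h)
  exact (mem_filter.mp this).2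

lemma pt_le_of_even {i k : Fin n} (h : Even (rk w i)) (hk : k ∈ cls w (w i)) (hik : i < k) :
    pt w hE i ≤ k := by
  unfold pt
  rw [dif_pos h]
  exact min'_le _ _ (mem_filter.mpr ⟨hk, hik⟩)

lemma le_pt_of_odd {i k : Fin n} (h : ¬ Even (rk w i)) (hk : k ∈ cls w (w i)) (hik : k < i) :
    k ≤ pt w hE i := by
  unfold pt
  rw [dif_neg h]
  apply le_max'
  exact mem_filter.mpr ⟨hk, hik⟩

lemma filter_lt_pt_of_even {i : Fin n} (h : Even (rk w i)) :
    (cls w (w i)).filter (fun k => k < pt w hE i)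
      = insert i ((cls w (w i)).filter (fun k => k < i)) := by
  ext k
  simp only [mem_insert, mem_filter]
  constructor
  · rintro ⟨hk, hkj⟩
    rcases lt_trichotomy k i with h1 | h1 | h1
    · exact Or.inr ⟨hk, h1⟩
    · exact Or.inl h1
    · exact absurd (pt_le_of_even hE h hk h1) (not_le.mpr hkj)
  · rintro (rfl | ⟨hk, hki⟩)
    · exact ⟨mem_cls_self w k, lt_pt hE h⟩
    · exact ⟨hk, hki.trans (lt_pt hE h)⟩

lemma filter_lt_of_odd {i : Fin n} (h : ¬ Even (rk w i)) :
    (cls w (w i)).filter (fun k => k < i)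
      = insert (pt w hE i) ((cls w (w i)).filter (fun k => k < pt w hE i)) := by
  ext k
  simp only [mem_insert, mem_filter]
  constructor
  · rintro ⟨hk, hki⟩
    rcases lt_trichotomy k (pt w hE i) with h1 | h1 | h1
    · exact Or.inr ⟨hk, h1⟩
    · exact Or.inl h1
    · exact absurd (le_pt_of_odd hE h hk hki) (not_le.mpr h1)
  · rintro (rfl | ⟨hk, hki⟩)
    · exact ⟨pt_mem hE i, pt_lt hE h⟩
    · exact ⟨hk, hki.trans (pt_lt hE h)⟩

lemma rk_pt_of_even {i : Fin n} (h : Even (rk w i)) : rk w (pt w hE i) = rk w i + 1 := by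
  have hw : w (pt w hE i) = w i := w_pt hE i
  unfold rk
  rw [hw, filter_lt_pt_of_even hE h, card_insert_of_notMem (by simp)]

lemma rk_pt_of_odd {i : Fin n} (h : ¬ Even (rk w i)) : rk w (pt w hE i) + 1 = rk w i := by
  have hw : w (pt w hE i) = w i := w_pt hE i
  unfold rk
  rw [hw, filter_lt_of_odd hE h, card_insert_of_notMem (by simp)]

lemma cls_pt (i : Fin n) : cls w (w (pt w hE i)) = cls w (w i) := by rw [w_pt hE i]

lemma pt_pt (i : Fin n) : pt w hE (pt w hE i) = i := by
  by_cases h : Even (rk w i)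
  · have hodd : ¬ Even (rk w (pt w hE i)) := by
      rw [rk_pt_of_even hE h]
      simpa [Nat.even_add_one] using h
    have h1 : i ≤ pt w hE (pt w hE i) := by
      refine le_pt_of_odd hE hodd ?_ (lt_pt hE h)
      rw [cls_pt hE i]; exact mem_cls_self w i
    have h2 : ¬ i < pt w hE (pt w hE i) := by
      intro hlt
      have hmem : pt w hE (pt w hE i) ∈ cls w (w i) := by
        rw [← cls_pt hE i]; exact pt_mem hE _
      have := pt_le_of_even hE h hmem hlt
      exact absurd (pt_lt hE hodd) (not_lt.mpr this)
    omega
  · have heven : Even (rk w (pt w hE i)) := by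
      have := rk_pt_of_odd hE h
      rcases Nat.even_or_odd (rk w (pt w hE i)) with h'|h'
      · exact h'
      · exfalso; apply h; rw [← this]; simpa [Nat.even_add_one] using h'
    have h1 : pt w hE (pt w hE i) ≤ i := by
      refine pt_le_of_even hE heven ?_ (pt_lt hE h)
      rw [cls_pt hE i]; exact mem_cls_self w i
    have h2 : ¬ pt w hE (pt w hE i) < i := by
      intro hlt
      have hmem : pt w hE (pt w hE i) ∈ cls w (w i) := by
        rw [← cls_pt hE i]; exact pt_mem hE _
      have := le_pt_of_odd hE h hmem hlt
      exact absurd (lt_pt hE heven) (not_lt.mpr this)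
    omega

def Op (w : Fin n → Fin m) : Finset (Fin n) := univ.filter (fun i => Even (rk w i))

def Cl (w : Fin n → Fin m) : Finset (Fin n) := univ \ Op w

omit hE in
lemma mem_Op {i : Fin n} : i ∈ Op w ↔ Even (rk w i) := by simp [Op]

omit hE in
lemma mem_Cl {i : Fin n} : i ∈ Cl w ↔ ¬ Even (rk w i) := by simp [Cl, Op]

lemma pt_mem_Cl {i : Fin n} (hi : i ∈ Op w) : pt w hE i ∈ Cl w := by
  rw [mem_Cl, rk_pt_of_even hE (mem_Op.mp hi)]
  simpa [Nat.even_add_one] using mem_Op.mp hi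

lemma pt_mem_Op {i : Fin n} (hi : i ∈ Cl w) : pt w hE i ∈ Op w := by
  rw [mem_Op]
  have h := mem_Cl.mp hi
  have := rk_pt_of_odd hE h
  rcases Nat.even_or_odd (rk w (pt w hE i)) with h'|h'
  · exact h'
  · exfalso; apply h; rw [← this]; simpa [Nat.even_add_one] using h'

lemma two_mul_card_Op : 2 * (Op w).card = n := by
  have h1 : (Op w).card = (Cl w).card := by
    refine card_bij' (fun a _ => pt w hE a) (fun a _ => pt w hE a)
      (fun a ha => pt_mem_Cl hE ha) (fun a ha => pt_mem_Op hE ha)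
      (fun a _ => pt_pt hE a) (fun a _ => pt_pt hE a)
  have h2 : (Op w).card + (Cl w).card = n := by
    have : (Cl w).card = n - (Op w).card := by
      rw [Cl, card_sdiff_of_subset (subset_univ _), card_univ, Fintype.card_fin]
    have h3 : (Op w).card ≤ n := by
      have := card_le_card (subset_univ (Op w))
      simpa [card_univ] using this
    omega
  omega

lemma exists_two_openers (a : Fin m) (h4 : 4 ≤ (cls w a).card) :
    ∃ x z : Fin n, x ∈ Op w ∧ z ∈ Op w ∧ x ≠ z ∧ w x = a ∧ w z = a := by
  have hne : (cls w a).Nonempty := card_pos.mp (by omega)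
  set x := (cls w a).min' hne with hxdef
  have hxc : x ∈ cls w a := min'_mem _ _
  have hwx : w x = a := cls_eq_of_mem hxc
  have hrkx : rk w x = 0 := by
    unfold rk
    rw [hwx, card_eq_zero, filter_eq_empty_iff]
    intro k hk
    exact not_lt.mpr (min'_le _ _ hk)
  have hEx : Even (rk w x) := by rw [hrkx]; exact Even.zero
  have hxO : x ∈ Op w := mem_Op.mpr hEx
  set y := pt w hE x with hydef
  have hxy : x < y := lt_pt hE hEx
  have hyc : y ∈ cls w a := by rw [← hwx]; exact pt_mem hE x
  have hne2 : ((cls w a) \ {x, y}).Nonempty := by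
    rw [← card_pos]
    have hc2 : ({x, y} : Finset (Fin n)).card ≤ 2 := (card_insert_le _ _).trans (by simp)
    have := le_card_sdiff ({x, y} : Finset (Fin n)) (cls w a)
    omega
  set z := ((cls w a) \ {x, y}).min' hne2 with hzdef
  have hz := min'_mem _ hne2
  rw [mem_sdiff, mem_insert, mem_singleton] at hz
  obtain ⟨hzc, hzne⟩ := hz
  push_neg at hzne
  obtain ⟨hzx, hzy⟩ := hzne
  have hwz : w z = a := cls_eq_of_mem hzc
  have hxz : x < z := lt_of_le_of_ne (min'_le _ _ hzc) (Ne.symm hzx)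
  have hyz : y < z := by
    have h1 : z ∈ cls w (w x) := by rw [hwx]; exact hzc
    have := pt_le_of_even hE hEx h1 hxz
    exact lt_of_le_of_ne this hzy.symm
  have hrkz : rk w z = 2 := by
    unfold rk
    rw [hwz]
    have hset : (cls w a).filter (fun k => k < z) = {x, y} := by
      ext k
      simp only [mem_filter, mem_insert, mem_singleton]
      constructor
      · rintro ⟨hk, hkz⟩
        by_contra hcon
        push_neg at hcon
        obtain ⟨hkx, hky⟩ := hcon
        have h5 : x < k := lt_of_le_of_ne (min'_le _ _ hk) (Ne.symm hkx)
        have h6 : y < k := by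
          have h7 : k ∈ cls w (w x) := by rw [hwx]; exact hk
          exact lt_of_le_of_ne (pt_le_of_even hE hEx h7 h5) (Ne.symm hky)
        have h8 : k ∈ (cls w a) \ {x, y} := by
          rw [mem_sdiff, mem_insert, mem_singleton]
          exact ⟨hk, by push_neg; exact ⟨hkx, hky⟩⟩
        exact absurd (min'_le _ _ h8) (not_le.mpr hkz)
      · rintro (rfl | rfl)
        · exact ⟨hxc, hxz⟩
        · exact ⟨hyc, hyz⟩
    rw [hset, card_pair hxy.ne]
  have hzO : z ∈ Op w := mem_Op.mpr (by rw [hrkz]; exact ⟨1, rfl⟩)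
  exact ⟨x, z, hxO, hzO, hxz.ne, hwx, hwz⟩

omit hE in
lemma emb_symm {p : ℕ} {s : Finset (Fin n)} (h : s.card = p) (u : {x // x ∈ s}) :
    s.orderEmbOfFin h ((s.orderIsoOfFin h).symm u) = (u : Fin n) := by
  rw [← Finset.coe_orderIsoOfFin_apply, OrderIso.apply_symm_apply]

omit hE in
lemma symm_emb {p : ℕ} {s : Finset (Fin n)} (h : s.card = p) (k : Fin p)
    (hm : s.orderEmbOfFin h k ∈ s) :
    (s.orderIsoOfFin h).symm ⟨s.orderEmbOfFin h k, hm⟩ = k := by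
  have : (⟨s.orderEmbOfFin h k, hm⟩ : {x // x ∈ s}) = s.orderIsoOfFin h k :=
    Subtype.ext (Finset.coe_orderIsoOfFin_apply s h k).symm
  rw [this, OrderIso.symm_apply_apply]

variable {p : ℕ}

/-- the matching permutation: which opener pairs with which closer -/
def prm (hOp : (Op w).card = p) (hCl : (Cl w).card = p) : Equiv.Perm (Fin p) where
  toFun k := ((Op w).orderIsoOfFin hOp).symm
    ⟨pt w hE ((Cl w).orderEmbOfFin hCl k), pt_mem_Op hE (Finset.orderEmbOfFin_mem _ hCl k)⟩
  invFun k := ((Cl w).orderIsoOfFin hCl).symm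
    ⟨pt w hE ((Op w).orderEmbOfFin hOp k), pt_mem_Cl hE (Finset.orderEmbOfFin_mem _ hOp k)⟩
  left_inv k := by
    have h1 : (Op w).orderEmbOfFin hOp (((Op w).orderIsoOfFin hOp).symm
        ⟨pt w hE ((Cl w).orderEmbOfFin hCl k), pt_mem_Op hE (Finset.orderEmbOfFin_mem _ hCl k)⟩)
        = pt w hE ((Cl w).orderEmbOfFin hCl k) := emb_symm hOp _
    simp only [h1, pt_pt hE]
    exact symm_emb hCl k (Finset.orderEmbOfFin_mem _ hCl k)
  right_inv k := by
    have h1 : (Cl w).orderEmbOfFin hCl (((Cl w).orderIsoOfFin hCl).symm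
        ⟨pt w hE ((Op w).orderEmbOfFin hOp k), pt_mem_Cl hE (Finset.orderEmbOfFin_mem _ hOp k)⟩)
        = pt w hE ((Op w).orderEmbOfFin hOp k) := emb_symm hCl _
    simp only [h1, pt_pt hE]
    exact symm_emb hOp k (Finset.orderEmbOfFin_mem _ hOp k)

omit hE in
/-- the letters on the openers -/
def ltr (w : Fin n → Fin m) (hOp : (Op w).card = p) : Fin p → Fin m :=
  fun k => w ((Op w).orderEmbOfFin hOp k)

lemma ltr_prm (hOp : (Op w).card = p) (hCl : (Cl w).card = p) (k : Fin p) :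
    ltr w hOp (prm hE hOp hCl k) = w ((Cl w).orderEmbOfFin hCl k) := by
  show w ((Op w).orderEmbOfFin hOp (((Op w).orderIsoOfFin hOp).symm _)) = _
  rw [emb_symm hOp]
  exact w_pt hE _

lemma ltr_not_inj (hOp : (Op w).card = p) (a : Fin m) (h4 : 4 ≤ (cls w a).card) :
    ¬ Function.Injective (ltr w hOp) := by
  obtain ⟨x, z, hxO, hzO, hxz, hwx, hwz⟩ := exists_two_openers hE a h4
  intro hinj
  have e1 : ltr w hOp (((Op w).orderIsoOfFin hOp).symm ⟨x, hxO⟩)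
      = ltr w hOp (((Op w).orderIsoOfFin hOp).symm ⟨z, hzO⟩) := by
    unfold ltr
    rw [emb_symm hOp, emb_symm hOp]
    simp [hwx, hwz]
  have e2 := hinj e1
  apply hxz
  have := congrArg ((Op w).orderIsoOfFin hOp) e2
  rw [OrderIso.apply_symm_apply, OrderIso.apply_symm_apply] at this
  exact congrArg Subtype.val this

omit hE in
lemma orderEmbOfFin_congr {s t : Finset (Fin n)} (hst : s = t) (hs : s.card = p)
    (ht : t.card = p) : s.orderEmbOfFin hs = t.orderEmbOfFin ht := by subst hst; rfl

omit hE in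
lemma orderIsoOfFin_symm_congr {s t : Finset (Fin n)} (hst : s = t) (hs : s.card = p)
    (ht : t.card = p) (x : Fin n) (hxs : x ∈ s) (hxt : x ∈ t) :
    ((s.orderIsoOfFin hs).symm ⟨x, hxs⟩ : Fin p) = (t.orderIsoOfFin ht).symm ⟨x, hxt⟩ := by
  subst hst; rfl

omit hE in
lemma recover [NeZero m] (f : Fin p → Fin m) {i j : Fin p} (hij : i ≠ j) (hf : f i = f j) :
    Function.update (Function.update f j 0) j (Function.update f j 0 i) = f := by
  funext x
  rcases eq_or_ne x j with rfl | hx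
  · rw [Function.update_self, Function.update_of_ne hij, hf]
  · rw [Function.update_of_ne hx, Function.update_of_ne hx]

/-- the encoding of a word -/
noncomputable def code [NeZero m] (hOp : (Op w).card = p) (hCl : (Cl w).card = p)
    (hNI : ¬ Function.Injective (ltr w hOp)) :
    Finset (Fin n) × Equiv.Perm (Fin p) × Fin p × ((_ : Fin p) × (Fin p → Fin m)) :=
  have h := Function.not_injective_iff.mp hNI
  (Op w, prm hE hOp hCl, h.choose,
    ⟨h.choose_spec.choose, Function.update (ltr w hOp) h.choose_spec.choose 0⟩)

lemma ltr_eq_of_code_eq [NeZero m] {w' : Fin n → Fin m} (hE' : ∀ a, Even (cls w' a).card)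
    (hOp : (Op w).card = p) (hCl : (Cl w).card = p) (hNI : ¬ Function.Injective (ltr w hOp))
    (hOp' : (Op w').card = p) (hCl' : (Cl w').card = p)
    (hNI' : ¬ Function.Injective (ltr w' hOp'))
    (h : code hE hOp hCl hNI = code hE' hOp' hCl' hNI') :
    ltr w hOp = ltr w' hOp' := by
  have hex := Function.not_injective_iff.mp hNI
  have hex' := Function.not_injective_iff.mp hNI'
  obtain ⟨hfi, hfj⟩ := hex.choose_spec.choose_spec
  obtain ⟨hfi', hfj'⟩ := hex'.choose_spec.choose_spec
  have h3 : hex.choose = hex'.choose := by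
    have := congrArg (fun t => t.2.2.1) h
    simpa [code] using this
  have h4 : (⟨hex.choose_spec.choose, Function.update (ltr w hOp) hex.choose_spec.choose 0⟩ :
      (_ : Fin p) × (Fin p → Fin m))
      = ⟨hex'.choose_spec.choose, Function.update (ltr w' hOp') hex'.choose_spec.choose 0⟩ := by
    have := congrArg (fun t => t.2.2.2) h
    simpa [code] using this
  obtain ⟨hj, hg⟩ := Sigma.mk.inj_iff.mp h4
  have hgg : Function.update (ltr w hOp) hex.choose_spec.choose 0
      = Function.update (ltr w' hOp') hex'.choose_spec.choose 0 := eq_of_heq hg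
  calc ltr w hOp
      = Function.update (Function.update (ltr w hOp) hex.choose_spec.choose 0)
        hex.choose_spec.choose
        (Function.update (ltr w hOp) hex.choose_spec.choose 0 hex.choose) :=
        (recover _ hfj hfi).symm
    _ = Function.update (Function.update (ltr w' hOp') hex'.choose_spec.choose 0)
        hex'.choose_spec.choose
        (Function.update (ltr w' hOp') hex'.choose_spec.choose 0 hex'.choose) := by
        rw [hgg, hj, h3]
    _ = ltr w' hOp' := recover _ hfj' hfi'

lemma decode [NeZero m] {w' : Fin n → Fin m} (hE' : ∀ a, Even (cls w' a).card)
    (hOp : (Op w).card = p) (hCl : (Cl w).card = p) (hNI : ¬ Function.Injective (ltr w hOp))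
    (hOp' : (Op w').card = p) (hCl' : (Cl w').card = p)
    (hNI' : ¬ Function.Injective (ltr w' hOp'))
    (h : code hE hOp hCl hNI = code hE' hOp' hCl' hNI') : w = w' := by
  have h1 : Op w = Op w' := congrArg (fun t => t.1) h
  have h1c : Cl w = Cl w' := by rw [Cl, Cl, h1]
  have h2 : prm hE hOp hCl = prm hE' hOp' hCl' := congrArg (fun t => t.2.1) h
  have hltr : ltr w hOp = ltr w' hOp' :=
    ltr_eq_of_code_eq hE hE' hOp hCl hNI hOp' hCl' hNI' h
  funext x
  by_cases hx : x ∈ Op w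
  · have hx' : x ∈ Op w' := h1 ▸ hx
    have e1 : w x = ltr w hOp (((Op w).orderIsoOfFin hOp).symm ⟨x, hx⟩) := by
      unfold ltr; rw [emb_symm hOp]
    have e3 : w' x = ltr w' hOp' (((Op w').orderIsoOfFin hOp').symm ⟨x, hx'⟩) := by
      unfold ltr; rw [emb_symm hOp']
    rw [e1, e3, hltr, orderIsoOfFin_symm_congr h1 hOp hOp' x hx hx']
  · have hxc : x ∈ Cl w := by rw [mem_Cl]; simpa [mem_Op] using hx
    have hxc' : x ∈ Cl w' := h1c ▸ hxc
    have e1 : w x = ltr w hOp (prm hE hOp hCl (((Cl w).orderIsoOfFin hCl).symm ⟨x, hxc⟩)) := by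
      rw [ltr_prm hE hOp hCl, emb_symm hCl]
    have e3 : w' x = ltr w' hOp'
        (prm hE' hOp' hCl' (((Cl w').orderIsoOfFin hCl').symm ⟨x, hxc'⟩)) := by
      rw [ltr_prm hE' hOp' hCl', emb_symm hCl']
    rw [e1, e3, hltr, h2, orderIsoOfFin_symm_congr h1c hCl hCl' x hxc hxc']

/-- the target set of codes -/
def Tgt (p m n : ℕ) [NeZero m] :
    Finset (Finset (Fin n) × Equiv.Perm (Fin p) × Fin p × ((_ : Fin p) × (Fin p → Fin m))) :=
  (univ.powersetCard p) ×ˢ (univ : Finset (Equiv.Perm (Fin p))) ×ˢ (univ : Finset (Fin p)) ×ˢ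
    ((univ : Finset (Fin p)).sigma fun j => univ.filter fun g : Fin p → Fin m => g j = 0)

lemma code_mem [NeZero m] (hOp : (Op w).card = p) (hCl : (Cl w).card = p)
    (hNI : ¬ Function.Injective (ltr w hOp)) :
    code hE hOp hCl hNI ∈ Tgt p m n := by
  unfold Tgt code
  simp only [mem_product, mem_sigma, mem_filter, mem_univ, true_and, and_true,
    mem_powersetCard]
  exact ⟨⟨subset_univ _, hOp⟩, Function.update_self _ _ _⟩

omit hE in
lemma card_filter_zero_at [NeZero m] (j : Fin p) :
    ((univ : Finset (Fin p → Fin m)).filter fun g : Fin p → Fin m => g j = 0).card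
      = m ^ (p - 1) := by
  have hpi : ((univ : Finset (Fin p → Fin m)).filter fun g : Fin p → Fin m => g j = 0)
      = Fintype.piFinset (fun i => if i = j then ({0} : Finset (Fin m)) else univ) := by
    ext g
    simp only [mem_filter, mem_univ, true_and, Fintype.mem_piFinset]
    constructor
    · intro hg i
      by_cases hi : i = j
      · subst hi; simp [hg]
      · simp [hi]
    · intro hg
      have := hg j
      simpa using this
  rw [hpi, Fintype.card_piFinset]
  have : ∀ i : Fin p, ((if i = j then ({0} : Finset (Fin m)) else univ)).card
      = if i = j then 1 else m := by
    intro i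
    split <;> simp
  rw [Finset.prod_congr rfl (fun i _ => this i)]
  rw [Finset.prod_eq_prod_diff_singleton_mul (mem_univ j)]
  rw [if_pos rfl, mul_one]
  rw [Finset.prod_congr rfl (fun i hi => if_neg (by simpa [mem_sdiff] using (mem_sdiff.mp hi).2))]
  rw [Finset.prod_const, card_sdiff_of_subset (by simp), card_univ, Fintype.card_fin, card_singleton]

omit hE in
lemma card_Tgt [NeZero m] :
    (Tgt p m n).card = n.choose p * (Nat.factorial p * (p * (p * m ^ (p - 1)))) := by
  unfold Tgt
  rw [card_product, card_product, card_product, card_sigma]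
  congr 1
  · rw [card_powersetCard, card_univ, Fintype.card_fin]
  congr 1
  · rw [card_univ, Fintype.card_perm, Fintype.card_fin]
  congr 1
  · rw [card_univ, Fintype.card_fin]
  rw [Finset.sum_congr rfl (fun j _ => card_filter_zero_at j), Finset.sum_const,
    card_univ, Fintype.card_fin, smul_eq_mul]

end WESP

open WESP

/-- W(m,p) − N(m,p) ≤ (4e)^p · m^{p−1} · p!, where W(m,p) counts words of
length 2p over an alphabet of m letters with all letter multiplicities even,
and N(m,p) counts those whose nonzero letter multiplicities all equal 2. -/
theorem words_even_sub_pairs_le (m p : ℕ) (hm : 1 ≤ m) (hp : 1 ≤ p) :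
    ((Finset.univ.filter (fun w : Fin (2 * p) → Fin m =>
        ∀ a : Fin m, Even (Finset.univ.filter (fun i => w i = a)).card)).card : ℝ)
      - ((Finset.univ.filter (fun w : Fin (2 * p) → Fin m =>
        ∀ a : Fin m, (Finset.univ.filter (fun i => w i = a)).card = 0 ∨
          (Finset.univ.filter (fun i => w i = a)).card = 2)).card : ℝ)
      ≤ (4 * Real.exp 1) ^ p * (m : ℝ) ^ (p - 1) * p.factorial := by
  classical
  haveI : NeZero m := ⟨by omega⟩
  set W := (Finset.univ.filter (fun w : Fin (2 * p) → Fin m =>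
      ∀ a : Fin m, Even (Finset.univ.filter (fun i => w i = a)).card)) with hWdef
  set N := (Finset.univ.filter (fun w : Fin (2 * p) → Fin m =>
      ∀ a : Fin m, (Finset.univ.filter (fun i => w i = a)).card = 0 ∨
        (Finset.univ.filter (fun i => w i = a)).card = 2)) with hNdef
  have hsub : N ⊆ W := by
    intro v hv
    rw [hNdef, mem_filter] at hv
    rw [hWdef, mem_filter]
    refine ⟨mem_univ _, fun a => ?_⟩
    rcases hv.2 a with h | h
    · rw [h]; exact Even.zero
    · rw [h]; exact ⟨1, rfl⟩
  have hP : ∀ v ∈ W \ N, ∃ (hE : ∀ a, Even (cls v a).card) (hOp : (Op v).card = p)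
      (hCl : (Cl v).card = p), ¬ Function.Injective (ltr v hOp) := by
    intro v hv
    rw [mem_sdiff] at hv
    obtain ⟨hvW, hvN⟩ := hv
    have hE : ∀ a, Even (cls v a).card := (mem_filter.mp hvW).2
    have hOp : (Op v).card = p := by
      have := two_mul_card_Op hE
      omega
    have hCl : (Cl v).card = p := by
      rw [Cl, card_sdiff_of_subset (subset_univ _), card_univ, Fintype.card_fin]
      omega
    rw [hNdef, mem_filter, not_and] at hvN
    have := hvN (mem_univ v)
    push_neg at this
    obtain ⟨a, ha0, ha2⟩ := this
    have h4 : 4 ≤ (cls v a).card := by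
      have ha0' : (cls v a).card ≠ 0 := ha0
      have ha2' : (cls v a).card ≠ 2 := ha2
      obtain ⟨r, hr⟩ := hE a
      omega
    exact ⟨hE, hOp, hCl, ltr_not_inj hE hOp a h4⟩
  have hcard : (W \ N).card ≤ (Tgt p m (2 * p)).card := by
    apply Finset.card_le_card_of_injOn (fun v =>
      if h : ∃ (hE : ∀ a, Even (cls v a).card) (hOp : (Op v).card = p)
          (hCl : (Cl v).card = p), ¬ Function.Injective (ltr v hOp) then
        code h.choose h.choose_spec.choose h.choose_spec.choose_spec.choose
          h.choose_spec.choose_spec.choose_spec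
      else (∅, Equiv.refl _, ⟨0, by omega⟩, ⟨⟨0, by omega⟩, fun _ => 0⟩))
    · intro v hv
      beta_reduce
      rw [dif_pos (hP v hv)]
      exact code_mem _ _ _ _
    · intro v hv u hu hvu
      simp only [dif_pos (hP v hv), dif_pos (hP u hu)] at hvu
      exact decode _ _ _ _ _ _ _ _ hvu
  have hWN : ((W \ N).card : ℝ) = (W.card : ℝ) - N.card := by
    rw [card_sdiff_of_subset hsub, Nat.cast_sub (card_le_card hsub)]
  rw [← hWN]
  have hch : ((2 * p).choose p : ℝ) ≤ 4 ^ p := by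
    have h1 : (2 * p).choose p ≤ 2 ^ (2 * p) := by
      calc (2 * p).choose p ≤ ∑ i ∈ Finset.range (2 * p + 1), (2 * p).choose i :=
            Finset.single_le_sum (fun i _ => Nat.zero_le _) (by simp [Nat.lt_succ]; omega)
        _ = 2 ^ (2 * p) := Nat.sum_range_choose _
    have h2 : (2 : ℕ) ^ (2 * p) = 4 ^ p := by rw [pow_mul]; norm_num
    calc ((2 * p).choose p : ℝ) ≤ ((4 : ℕ) ^ p : ℝ) := by exact_mod_cast h2 ▸ h1
      _ = 4 ^ p := by push_cast; ring
  have hpp : (p : ℝ) * p ≤ Real.exp p := by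
    have h4s := Real.sum_le_exp_of_nonneg (x := (p : ℝ)) (by positivity) 4
    have hx : (0 : ℝ) ≤ p := by positivity
    simp only [Finset.sum_range_succ, Finset.sum_range_zero] at h4s
    norm_num [Nat.factorial] at h4s
    nlinarith [mul_nonneg hx (sq_nonneg ((p : ℝ) - 2))]
  have hexp : Real.exp p = Real.exp 1 ^ p := by
    rw [← Real.exp_nat_mul, mul_one]
  calc ((W \ N).card : ℝ) ≤ ((Tgt p m (2 * p)).card : ℝ) := Nat.cast_le.mpr hcard
    _ = ((2 * p).choose p : ℝ) * ((p.factorial : ℝ) * ((p : ℝ) * ((p : ℝ) * (m : ℝ) ^ (p - 1)))) := by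
        rw [card_Tgt]
        push_cast
        ring
    _ = (((2 * p).choose p : ℝ) * ((p : ℝ) * p)) * ((m : ℝ) ^ (p - 1) * p.factorial) := by ring
    _ ≤ ((4 : ℝ) ^ p * Real.exp p) * ((m : ℝ) ^ (p - 1) * p.factorial) := by
        refine mul_le_mul_of_nonneg_right ?_ (by positivity)
        exact mul_le_mul hch hpp (by positivity) (by positivity)
    _ = (4 * Real.exp 1) ^ p * (m : ℝ) ^ (p - 1) * p.factorial := by
        rw [mul_pow, hexp]
        ring
end

section
/- For all integers m ≥ 2 and 1 ≤ p < m, one has m^p − m!/(m−p)! ≤ m^{p−1} · p(p−1)/2. -/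
/-- For integers m ≥ 2 and 1 ≤ p < m,
m^p − m(m−1)···(m−p+1) ≤ m^{p−1} · p(p−1)/2. -/
theorem pow_sub_falling_factorial_le (m p : ℕ)
    (hm : 2 ≤ m) (hp : 1 ≤ p) (hpm : p < m) :
    (m : ℝ) ^ p - ∏ j ∈ Finset.range p, ((m : ℝ) - j)
      ≤ (m : ℝ) ^ (p - 1) * p * (p - 1) / 2 := by
  revert hpm
  induction p, hp using Nat.le_induction with
  | base =>
    intro _
    simp
  | succ p hp ih =>
    intro hpm
    have hpm' : p < m := Nat.lt_of_succ_lt hpm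
    have ih' := ih hpm'
    have hP : ∏ j ∈ Finset.range p, ((m : ℝ) - j) ≤ (m : ℝ) ^ p := by
      calc ∏ j ∈ Finset.range p, ((m : ℝ) - j)
          ≤ ∏ _j ∈ Finset.range p, (m : ℝ) := by
            apply Finset.prod_le_prod
            · intro j hj
              have : j < m := lt_trans (Finset.mem_range.mp hj) hpm'
              have : (j : ℝ) < m := by exact_mod_cast this
              linarith
            · intro j _
              have : (0:ℝ) ≤ j := Nat.cast_nonneg j
              linarith
        _ = (m : ℝ) ^ p := by simp
    have hP0 : 0 ≤ ∏ j ∈ Finset.range p, ((m : ℝ) - j) := by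
      apply Finset.prod_nonneg
      intro j hj
      have : j < m := lt_trans (Finset.mem_range.mp hj) hpm'
      have : (j : ℝ) < m := by exact_mod_cast this
      linarith
    have hmm : ((m : ℝ)) ^ (p - 1) * m = (m : ℝ) ^ p := by
      rw [← pow_succ]
      congr 1
      omega
    have hps : (p + 1) - 1 = p := by omega
    rw [hps, Finset.prod_range_succ]
    have hm0 : (0:ℝ) ≤ m := Nat.cast_nonneg m
    have hp1 : (1:ℝ) ≤ p := by exact_mod_cast hp
    push_cast
    set P := ∏ j ∈ Finset.range p, ((m : ℝ) - j) with hPdef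
    have e : (m:ℝ)^(p+1) - P*((m:ℝ)-p) = m*((m:ℝ)^p - P) + p*P := by
      rw [pow_succ]; ring
    have h1 : (m:ℝ)*((m:ℝ)^(p-1)*p*((p:ℝ)-1)/2) = (m:ℝ)^p*p*((p:ℝ)-1)/2 := by
      rw [← hmm]; ring
    have h2 : (p:ℝ)*P ≤ (p:ℝ)*(m:ℝ)^p :=
      mul_le_mul_of_nonneg_left hP (by linarith)
    have h3 := mul_le_mul_of_nonneg_left ih' hm0
    have e2 : (m:ℝ)^p*((p:ℝ)+1)*((p:ℝ)+1-1)/2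
        = (m:ℝ)^p*p*((p:ℝ)-1)/2 + (p:ℝ)*(m:ℝ)^p := by ring
    nlinarith [h1, h2, h3, e, e2]
end

section
/- Let X_1,...,X_p be i.i.d. random variables uniformly distributed on the four 2×2 Pauli matrices, and let w = w_1···w_{2p} be a word in the letters {1,...,p} of length 2p in which each letter appears exactly twice. If pairing equal letters yields a non-crossing pair partition of {1,...,2p}, then E[tr(X_{w_1}···X_{w_{2p}})] = 1, where tr is the normalized trace (1/2)Tr. -/
open Matrix

noncomputable def sigmaX : Matrix (Fin 2) (Fin 2) ℂ := !![0, 1; 1, 0]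
noncomputable def sigmaY : Matrix (Fin 2) (Fin 2) ℂ := !![0, -Complex.I; Complex.I, 0]
noncomputable def sigmaZ : Matrix (Fin 2) (Fin 2) ℂ := !![1, 0; 0, -1]

/-- The four Pauli matrices indexed by `Fin 4`. -/
noncomputable def pauli : Fin 4 → Matrix (Fin 2) (Fin 2) ℂ := ![1, sigmaX, sigmaY, sigmaZ]

lemma pauli_mul_self (m : Fin 4) : pauli m * pauli m = 1 := by
  fin_cases m <;>
    simp [pauli, sigmaX, sigmaY, sigmaZ, Matrix.mul_fin_two, Matrix.one_fin_two,
      Complex.I_mul_I, mul_neg, neg_mul, neg_neg]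

section Aux

variable {α : Type*} [DecidableEq α]

lemma count_ofFn {n : ℕ} (w : Fin n → α) (a : α) :
    (List.ofFn w).count a = (Finset.univ.filter (fun i => w i = a)).card := by
  rw [List.ofFn_eq_map, Fin.univ_def]
  simp only [Finset.card, Finset.filter, List.count, List.countP_map,
    List.countP_eq_length_filter, Multiset.quot_mk_to_coe, Multiset.filter_coe, Multiset.coe_card,
    List.filter_map, List.length_map]
  exact congrArg List.length (List.filter_congr fun x _ => rfl)

lemma sublist_of_four {L : List α} (i1 i2 i3 i4 : Fin L.length)
    (h12 : i1 < i2) (h23 : i2 < i3) (h34 : i3 < i4) :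
    List.Sublist [L.get i1, L.get i2, L.get i3, L.get i4] L := by
  rw [List.sublist_iff_exists_fin_orderEmbedding_get_eq]
  have hsm : StrictMono (fun j : Fin 4 => ![i1, i2, i3, i4] j) := by
    intro a b hab
    fin_cases a <;> fin_cases b <;>
      simp_all <;>
      first
        | exact h12 | exact h23 | exact h34
        | exact h12.trans h23 | exact h23.trans h34 | exact (h12.trans h23).trans h34
        | omega
  refine ⟨OrderEmbedding.ofStrictMono _ hsm, ?_⟩
  rintro ⟨v, hv⟩
  have hv4 : v < 4 := by simpa using hv
  interval_cases v <;> rfl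

lemma exists_adj {L : List α} (hne : L ≠ [])
    (hcount : ∀ a ∈ L, L.count a = 2)
    (hnc : ∀ a b : α, a ≠ b → ¬ List.Sublist [a, b, a, b] L) :
    ∃ (l₁ l₂ : List α) (x : α), L = l₁ ++ x :: x :: l₂ := by
  have hpos : 0 < L.length := List.length_pos_iff.mpr hne
  set S : Finset (Fin L.length × Fin L.length) :=
    Finset.univ.filter (fun q => q.1 < q.2 ∧ L.get q.1 = L.get q.2) with hS
  have hSne : S.Nonempty := by
    have hmem : L.get ⟨0, hpos⟩ ∈ L := L.get_mem _
    have hdup : List.Duplicate (L.get ⟨0, hpos⟩) L :=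
      List.duplicate_iff_two_le_count.mpr (by rw [hcount _ hmem])
    rw [List.duplicate_iff_exists_distinct_get] at hdup
    obtain ⟨i, j, hij, hi, hj⟩ := hdup
    refine ⟨(i, j), ?_⟩
    simp only [hS, Finset.mem_filter, Finset.mem_univ, true_and]
    exact ⟨hij, hi.symm.trans hj⟩
  obtain ⟨⟨i, j⟩, hmemS, hmin⟩ := S.exists_min_image (fun q => q.2.val - q.1.val) hSne
  simp only [hS, Finset.mem_filter, Finset.mem_univ, true_and] at hmemS
  obtain ⟨hij, heq⟩ := hmemS
  have hj1 : j.val = i.val + 1 := by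
    by_contra hne2
    have h2 : i.val + 1 < j.val := by
      have := hij
      rw [Fin.lt_def] at this
      omega
    have hk : i.val + 1 < L.length := h2.trans j.isLt
    set k : Fin L.length := ⟨i.val + 1, hk⟩ with hkdef
    have hxa : L.get k ≠ L.get i := by
      intro hx
      have hmemik : (i, k) ∈ S := by
        simp only [hS, Finset.mem_filter, Finset.mem_univ, true_and]
        exact ⟨Fin.lt_def.mpr (Nat.lt_succ_self _), hx.symm⟩
      have h3 : j.val - i.val ≤ (i.val + 1) - i.val := hmin _ hmemik
      omega
    obtain ⟨m, hmk, hm⟩ : ∃ m : Fin L.length, m ≠ k ∧ L.get m = L.get k := by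
      have hdup : List.Duplicate (L.get k) L :=
        List.duplicate_iff_two_le_count.mpr (by rw [hcount _ (L.get_mem _)])
      rw [List.duplicate_iff_exists_distinct_get] at hdup
      obtain ⟨u, v, huv, hu, hv⟩ := hdup
      rcases eq_or_ne u k with rfl | h
      · exact ⟨v, (ne_of_gt huv), hv.symm⟩
      · exact ⟨u, h, hu.symm⟩
    have hmi : m ≠ i := by
      intro h; exact hxa (by rw [← hm, h])
    have hmj : m ≠ j := by
      intro h; apply hxa; rw [← hm, h]; exact heq.symm
    have hik : i < k := Fin.lt_def.mpr (Nat.lt_succ_self _)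
    have hkj : k < j := Fin.lt_def.mpr h2
    rcases lt_trichotomy m.val i.val with hlt | heqq | hgt
    · apply hnc (L.get k) (L.get i) hxa
      have hs := sublist_of_four m i k j (Fin.lt_def.mpr hlt) hik hkj
      rwa [hm, ← heq] at hs
    · exact hmi (Fin.ext heqq)
    · rcases lt_trichotomy m.val j.val with hlt2 | heq2 | hgt2
      · have hkm : k < m := by
          rw [Fin.lt_def]
          have neval : m.val ≠ k.val := fun hh => hmk (Fin.ext hh)
          have : k.val = i.val + 1 := rfl
          omega
        have hmemS2 : (k, m) ∈ S := by
          simp only [hS, Finset.mem_filter, Finset.mem_univ, true_and]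
          exact ⟨hkm, hm.symm⟩
        have h4 : j.val - i.val ≤ m.val - k.val := hmin _ hmemS2
        have hkval : k.val = i.val + 1 := rfl
        omega
      · exact hmj (Fin.ext heq2)
      · apply hnc (L.get i) (L.get k) (Ne.symm hxa)
        have hs := sublist_of_four i k j m hik hkj (Fin.lt_def.mpr hgt2)
        rwa [← heq, hm] at hs
  -- now j.val = i.val + 1 : adjacent equal pair, split the list
  have h1 : i.val < L.length := i.isLt
  have h2' : i.val + 1 < L.length := hj1 ▸ j.isLt
  have hjj : j = ⟨i.val + 1, h2'⟩ := Fin.ext hj1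
  have key2 : L.get i = L[i.val + 1]'h2' := by
    rw [heq, hjj, List.get_eq_getElem]
  refine ⟨L.take i.val, L.drop (i.val + 2), L.get i, ?_⟩
  conv_lhs => rw [← List.take_append_drop i.val L]
  congr 1
  rw [List.drop_eq_getElem_cons h1, List.drop_eq_getElem_cons h2']
  have e0 : L[i.val]'h1 = L.get i := rfl
  rw [e0, ← key2]

lemma prod_eq_one_of_noncrossing {M : Type*} [Monoid M] (g : α → M)
    (hg : ∀ a, g a * g a = 1) :
    ∀ (n : ℕ) (L : List α), L.length ≤ n →
      (∀ a ∈ L, L.count a = 2) →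
      (∀ a b : α, a ≠ b → ¬ List.Sublist [a, b, a, b] L) → (L.map g).prod = 1 := by
  intro n
  induction n with
  | zero =>
    intro L hlen _ _
    have : L = [] := List.eq_nil_of_length_eq_zero (Nat.le_zero.mp hlen)
    simp [this]
  | succ n ih =>
    intro L hlen hcount hnc
    rcases eq_or_ne L [] with rfl | hne
    · simp
    · obtain ⟨l₁, l₂, x, rfl⟩ := exists_adj hne hcount hnc
      have hsub : List.Sublist (l₁ ++ l₂) (l₁ ++ x :: x :: l₂) :=
        List.Sublist.append (List.Sublist.refl l₁)
          ((List.sublist_cons_self x l₂).trans (List.sublist_cons_self x (x :: l₂)))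
      have hcx := hcount x (by simp)
      have hc1 : l₁.count x = 0 ∧ l₂.count x = 0 := by
        simp only [List.count_append, List.count_cons_self, List.count_cons] at hcx
        constructor <;> omega
      have hlen' : (l₁ ++ l₂).length ≤ n := by
        simp only [List.length_append, List.length_cons] at hlen ⊢
        omega
      have hcount' : ∀ a ∈ l₁ ++ l₂, (l₁ ++ l₂).count a = 2 := by
        intro a ha
        have hax : a ≠ x := by
          rintro rfl
          rcases List.mem_append.mp ha with h | h
          · exact absurd (List.count_pos_iff.mpr h) (by omega)
          · exact absurd (List.count_pos_iff.mpr h) (by omega)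
        have := hcount a (hsub.mem ha)
        simp only [List.count_append, List.count_cons, if_neg hax.symm,
          beq_iff_eq, hax] at this ⊢
        simpa using this
      have hnc' : ∀ a b : α, a ≠ b → ¬ List.Sublist [a, b, a, b] (l₁ ++ l₂) :=
        fun a b hab hs => hnc a b hab (hs.trans hsub)
      have hprod := ih (l₁ ++ l₂) hlen' hcount' hnc'
      simp only [List.map_append, List.prod_append, List.map_cons, List.prod_cons] at hprod ⊢
      rw [← mul_assoc (g x), hg, one_mul]
      exact hprod

end Aux

/-- For X_1,...,X_p i.i.d. uniform on the four Pauli matrices and a word w of length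
2p in p letters in which each letter appears exactly twice and whose pairing of equal
letters is non-crossing, E[tr(X_{w_1}···X_{w_{2p}})] = 1 (tr the normalized trace).
The expectation is the uniform average over all 4^p assignments of Pauli matrices. -/
theorem noncrossing_pauli_word_expectation
    (p : ℕ) (hp : 1 ≤ p) (w : Fin (2 * p) → Fin p)
    (htwice : ∀ l : Fin p, (Finset.univ.filter (fun i => w i = l)).card = 2)
    (hnc : ¬ ∃ a b c d : Fin (2 * p),
      a < b ∧ b < c ∧ c < d ∧ w a = w c ∧ w b = w d ∧ w a ≠ w b) :
    (1 / 4 ^ p : ℂ) * ∑ X : Fin p → Fin 4,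
        (1 / 2 : ℂ) * Matrix.trace
          ((List.ofFn (fun i : Fin (2 * p) => pauli (X (w i)))).prod) = 1 := by
  have hlen : (List.ofFn w).length = 2 * p := List.length_ofFn
  have hcount : ∀ a ∈ List.ofFn w, (List.ofFn w).count a = 2 := by
    intro a _
    rw [count_ofFn]
    exact htwice a
  have hnc' : ∀ a b : Fin p, a ≠ b → ¬ List.Sublist [a, b, a, b] (List.ofFn w) := by
    intro a b hab hs
    rw [List.sublist_iff_exists_fin_orderEmbedding_get_eq] at hs
    obtain ⟨f, hf⟩ := hs
    apply hnc
    set i0 : Fin ([a, b, a, b] : List (Fin p)).length := ⟨0, by norm_num⟩ with hi0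
    set i1 : Fin ([a, b, a, b] : List (Fin p)).length := ⟨1, by norm_num⟩ with hi1
    set i2 : Fin ([a, b, a, b] : List (Fin p)).length := ⟨2, by norm_num⟩ with hi2
    set i3 : Fin ([a, b, a, b] : List (Fin p)).length := ⟨3, by norm_num⟩ with hi3
    refine ⟨Fin.cast hlen (f i0), Fin.cast hlen (f i1), Fin.cast hlen (f i2), Fin.cast hlen (f i3),
      ?_, ?_, ?_, ?_, ?_, ?_⟩
    · exact Fin.lt_def.mpr (f.strictMono (show i0 < i1 from Fin.mk_lt_mk.mpr (by norm_num)))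
    · exact Fin.lt_def.mpr (f.strictMono (show i1 < i2 from Fin.mk_lt_mk.mpr (by norm_num)))
    · exact Fin.lt_def.mpr (f.strictMono (show i2 < i3 from Fin.mk_lt_mk.mpr (by norm_num)))
    · have h0 := hf i0
      have h2 := hf i2
      rw [List.get_ofFn] at h0 h2
      change a = _ at h0; change a = _ at h2
      rw [← h0, ← h2]
    · have h1 := hf i1
      have h3 := hf i3
      rw [List.get_ofFn] at h1 h3
      change b = _ at h1; change b = _ at h3
      rw [← h1, ← h3]
    · have h0 := hf i0
      have h1 := hf i1
      rw [List.get_ofFn] at h0 h1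
      change a = _ at h0; change b = _ at h1
      rw [← h0, ← h1]
      exact hab
  have key : ∀ X : Fin p → Fin 4,
      (List.ofFn (fun i : Fin (2 * p) => pauli (X (w i)))).prod = 1 := by
    intro X
    have hmap : List.ofFn (fun i : Fin (2 * p) => pauli (X (w i)))
        = (List.ofFn w).map (fun l => pauli (X l)) := by
      rw [List.map_ofFn]
      rfl
    rw [hmap]
    exact prod_eq_one_of_noncrossing (fun l => pauli (X l)) (fun a => pauli_mul_self (X a))
      (List.ofFn w).length (List.ofFn w) le_rfl hcount hnc'
  have hsum : ∑ X : Fin p → Fin 4,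
      (1 / 2 : ℂ) * Matrix.trace
        ((List.ofFn (fun i : Fin (2 * p) => pauli (X (w i)))).prod)
      = ∑ _X : Fin p → Fin 4, (1 : ℂ) := by
    refine Finset.sum_congr rfl fun X _ => ?_
    rw [key X, Matrix.trace_one]
    norm_num
  rw [hsum]
  rw [Finset.sum_const, Finset.card_univ, Fintype.card_fun]
  simp only [Fintype.card_fin, nsmul_eq_mul, mul_one]
  rw [one_div, inv_mul_eq_one₀ (pow_ne_zero _ (by norm_num))]
  push_cast
  ring
end

section
/- Let X_1,...,X_p be i.i.d. random variables uniformly distributed on the four 2×2 Pauli matrices, and let w be a word in {1,...,p} of length 2p in which each letter appears exactly twice. If pairing equal letters yields a crossing pair partition of {1,...,2p}, then |E[tr(X_{w_1}···X_{w_{2p}})]| ≤ 1/4, where tr denotes the normalized trace (1/2)Tr. -/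
open Matrix

noncomputable def phaseT : Fin 4 → Fin 4 → ℂ :=
  ![![1,1,1,1], ![1,1,Complex.I,-Complex.I], ![1,-Complex.I,1,Complex.I], ![1,Complex.I,-Complex.I,1]]
def prodT : Fin 4 → Fin 4 → Fin 4 :=
  ![![0,1,2,3], ![1,0,3,2], ![2,3,0,1], ![3,2,1,0]]

lemma abs_phaseT (x y : Fin 4) : ‖phaseT x y‖ = 1 := by
  fin_cases x <;> fin_cases y <;> simp [phaseT, Matrix.vecHead, Matrix.vecTail]

lemma pauli_mul (x y : Fin 4) : pauli x * pauli y = phaseT x y • pauli (prodT x y) := by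
  fin_cases x <;> fin_cases y <;> ext i j <;> fin_cases i <;> fin_cases j <;>
    simp [pauli, sigmaX, sigmaY, sigmaZ, phaseT, prodT, Matrix.mul_apply, Fin.sum_univ_two,
      Matrix.smul_apply, Matrix.vecHead, Matrix.vecTail]

lemma twirl (M : Matrix (Fin 2) (Fin 2) ℂ) :
    ∑ x : Fin 4, pauli x * M * pauli x = (2 * M.trace) • 1 := by
  ext i j
  fin_cases i <;> fin_cases j <;>
    simp [pauli, sigmaX, sigmaY, sigmaZ, Fin.sum_univ_four, Matrix.mul_apply,
      Fin.sum_univ_two, Matrix.trace_fin_two, Matrix.one_apply, Matrix.sum_apply] <;>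
    ring_nf <;> simp [Complex.I_sq] <;> ring

lemma trace_pauli_mul (y j : Fin 4) :
    Matrix.trace (pauli y * pauli j) = if y = j then 2 else 0 := by
  fin_cases y <;> fin_cases j <;>
    simp [pauli, sigmaX, sigmaY, sigmaZ, Matrix.trace_fin_two, Matrix.mul_apply,
      Fin.sum_univ_two] <;> norm_num [Complex.ext_iff]

/-- `g` is a Pauli matrix up to a unimodular phase. -/
def IsP (g : Matrix (Fin 2) (Fin 2) ℂ) : Prop :=
  ∃ c : ℂ, ‖c‖ = 1 ∧ ∃ k : Fin 4, g = c • pauli k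

lemma IsP_pauli (x : Fin 4) : IsP (pauli x) := ⟨1, by simp, x, by simp⟩

lemma IsP_one : IsP 1 := by
  refine ⟨1, by simp, 0, ?_⟩
  simp [pauli]

lemma IsP_mul {g h : Matrix (Fin 2) (Fin 2) ℂ} (hg : IsP g) (hh : IsP h) : IsP (g * h) := by
  obtain ⟨c, hc, j, rfl⟩ := hg
  obtain ⟨d, hd, k, rfl⟩ := hh
  refine ⟨c * d * phaseT j k, by simp [norm_mul, hc, hd, abs_phaseT], prodT j k, ?_⟩
  rw [Matrix.smul_mul, Matrix.mul_smul, pauli_mul, smul_smul, smul_smul, mul_assoc]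

lemma IsP_prod : ∀ ms : List (Matrix (Fin 2) (Fin 2) ℂ), (∀ M ∈ ms, IsP M) → IsP ms.prod
  | [], _ => by simpa using IsP_one
  | (M :: ms), h => by
    rw [List.prod_cons]
    exact IsP_mul (h M (by simp)) (IsP_prod ms fun N hN => h N (by simp [hN]))

lemma key4 {g h : Matrix (Fin 2) (Fin 2) ℂ} (hg : IsP g) (hh : IsP h) :
    ‖∑ y : Fin 4, Matrix.trace (pauli y * g) * Matrix.trace (pauli y * h)‖ ≤ 4 := by
  obtain ⟨c, hc, j, rfl⟩ := hg
  obtain ⟨d, hd, k, rfl⟩ := hh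
  have : ∀ y : Fin 4, Matrix.trace (pauli y * c • pauli j) * Matrix.trace (pauli y * d • pauli k)
      = c * d * ((if y = j then 2 else 0) * (if y = k then 2 else 0)) := by
    intro y
    rw [Matrix.mul_smul, Matrix.mul_smul, Matrix.trace_smul, Matrix.trace_smul,
      trace_pauli_mul, trace_pauli_mul]
    simp [smul_eq_mul]; ring
  simp only [this, ← Finset.mul_sum]
  rw [norm_mul, norm_mul, hc, hd, one_mul, one_mul]
  have : ‖∑ y : Fin 4, (if y = j then (2:ℂ) else 0) * (if y = k then 2 else 0)‖ ≤ 4 := by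
    fin_cases j <;> fin_cases k <;> simp [Fin.sum_univ_four] <;> norm_num
  exact this

lemma inner_bound (A B C D E : Matrix (Fin 2) (Fin 2) ℂ)
    (hA : IsP A) (hB : IsP B) (hC : IsP C) (hD : IsP D) (hE : IsP E) :
    ‖∑ x : Fin 4, ∑ y : Fin 4,
      (1 / 2 : ℂ) * Matrix.trace
        (A * (pauli x * (B * (pauli y * (C * (pauli x * (D * (pauli y * E))))))))‖ ≤ 4 := by
  have step : ∀ y : Fin 4, (∑ x : Fin 4, (1 / 2 : ℂ) * Matrix.trace
        (A * (pauli x * (B * (pauli y * (C * (pauli x * (D * (pauli y * E)))))))))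
      = Matrix.trace (pauli y * (C * B)) * Matrix.trace (pauli y * (E * A * D)) := by
    intro y
    have h1 : ∀ x : Fin 4, Matrix.trace
        (A * (pauli x * (B * (pauli y * (C * (pauli x * (D * (pauli y * E))))))))
        = Matrix.trace ((pauli x * (B * (pauli y * C)) * pauli x) * (D * (pauli y * (E * A)))) := by
      intro x
      rw [Matrix.trace_mul_comm A]
      congr 1
      simp only [Matrix.mul_assoc]
    simp only [h1]
    rw [← Finset.mul_sum, ← Matrix.trace_sum, ← Finset.sum_mul, twirl, Matrix.smul_mul,
      Matrix.one_mul, Matrix.trace_smul, smul_eq_mul, Matrix.trace_mul_comm D,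
      Matrix.trace_mul_comm B, Matrix.mul_assoc (pauli y) C B,
      Matrix.mul_assoc (pauli y) (E * A) D]
    ring
  rw [Finset.sum_comm]
  simp only [step]
  exact key4 (IsP_mul hC hB) (IsP_mul (IsP_mul hE hA) hD)

lemma step_split {α} (L : List α) {j k : ℕ} (h : j ≤ k) :
    L.drop j = (L.drop j).take (k - j) ++ L.drop k := by
  conv_lhs => rw [← List.take_append_drop (k - j) (L.drop j)]
  rw [List.drop_drop, show j + (k - j) = k from by omega]

lemma slice_split {α} (L : List α) {a b c d : ℕ} (hab : a < b) (hbc : b < c) (hcd : c < d)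
    (hd : d < L.length) :
    L = L.take a ++ L[a]'(by omega) ::
      ((L.drop (a+1)).take (b - (a+1)) ++ L[b]'(by omega) ::
        ((L.drop (b+1)).take (c - (b+1)) ++ L[c]'(by omega) ::
          ((L.drop (c+1)).take (d - (c+1)) ++ L[d]'hd :: L.drop (d+1)))) := by
  conv_lhs => rw [← List.take_append_drop a L,
    List.drop_eq_getElem_cons (show a < L.length by omega),
    step_split L (show a + 1 ≤ b by omega),
    List.drop_eq_getElem_cons (show b < L.length by omega),
    step_split L (show b + 1 ≤ c by omega),
    List.drop_eq_getElem_cons (show c < L.length by omega),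
    step_split L (show c + 1 ≤ d by omega),
    List.drop_eq_getElem_cons (show d < L.length by omega)]

lemma mem_slice {α} {L : List α} {j k : ℕ} {v : α} (h : v ∈ (L.drop j).take k) :
    ∃ (i : ℕ) (hi : i < L.length), j ≤ i ∧ i < j + k ∧ L[i] = v := by
  obtain ⟨n, hn, hv⟩ := List.mem_iff_getElem.1 h
  have hn' := hn
  simp only [List.length_take, List.length_drop, lt_min_iff] at hn'
  refine ⟨j + n, by omega, by omega, by omega, ?_⟩
  rw [← hv, List.getElem_take, List.getElem_drop]

lemma mem_take' {α} {L : List α} {k : ℕ} {v : α} (h : v ∈ L.take k) :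
    ∃ (i : ℕ) (hi : i < L.length), i < k ∧ L[i] = v := by
  rw [← List.drop_zero (l := L)] at h
  obtain ⟨i, hi, h1, h2, h3⟩ := mem_slice h
  exact ⟨i, hi, by omega, h3⟩

lemma mem_drop' {α} {L : List α} {j : ℕ} {v : α} (h : v ∈ L.drop j) :
    ∃ (i : ℕ) (hi : i < L.length), j ≤ i ∧ L[i] = v := by
  obtain ⟨n, hn, hv⟩ := List.mem_iff_getElem.1 h
  have hn' := hn
  simp only [List.length_drop] at hn'
  exact ⟨j + n, by omega, by omega, by rw [← hv, List.getElem_drop]⟩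

/-- Splitting an assignment into values at two distinct letters and the rest. -/
def gfun {p : ℕ} (ℓ m : Fin p) [DecidableEq (Fin p)]
    (t : Fin 4 × Fin 4 × ({ i : Fin p // i ≠ ℓ ∧ i ≠ m } → Fin 4)) : Fin p → Fin 4 :=
  fun i => if h1 : i = ℓ then t.1 else if h2 : i = m then t.2.1 else t.2.2 ⟨i, h1, h2⟩

lemma gfun_fst {p : ℕ} (ℓ m : Fin p) (t) : gfun ℓ m t ℓ = t.1 := by simp [gfun]

lemma gfun_snd {p : ℕ} {ℓ m : Fin p} (hlm : ℓ ≠ m) (t) : gfun ℓ m t m = t.2.1 := by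
  simp [gfun, Ne.symm hlm]

lemma gfun_other {p : ℕ} {ℓ m : Fin p} (t t' : Fin 4 × Fin 4 × ({ i : Fin p // i ≠ ℓ ∧ i ≠ m } → Fin 4))
    (h : t.2.2 = t'.2.2) {i : Fin p} (h1 : i ≠ ℓ) (h2 : i ≠ m) : gfun ℓ m t i = gfun ℓ m t' i := by
  simp [gfun, h1, h2, h]

def gequiv {p : ℕ} (ℓ m : Fin p) (hlm : ℓ ≠ m) :
    (Fin 4 × Fin 4 × ({ i : Fin p // i ≠ ℓ ∧ i ≠ m } → Fin 4)) ≃ (Fin p → Fin 4) where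
  toFun := gfun ℓ m
  invFun := fun X => (X ℓ, X m, fun i => X i.1)
  left_inv := by
    rintro ⟨x, y, Z⟩
    refine Prod.ext ?_ (Prod.ext ?_ ?_)
    · simp [gfun]
    · simp [gfun, Ne.symm hlm]
    · funext i
      simp [gfun, i.2.1, i.2.2]
  right_inv := by
    intro X
    funext i
    by_cases h1 : i = ℓ
    · simp [gfun, h1]
    · by_cases h2 : i = m <;> simp [gfun, h1, h2, Ne.symm hlm]

set_option maxHeartbeats 1000000 in
/-- For X_1,...,X_p i.i.d. uniform on the four Pauli matrices and a word w of length
2p in p letters in which each letter appears exactly twice and whose pairing of equal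
letters has a crossing, |E[tr(X_{w_1}···X_{w_{2p}})]| ≤ 1/4 (tr the normalized trace).
The expectation is the uniform average over all 4^p assignments of Pauli matrices. -/
theorem crossing_pauli_word_expectation_le
    (p : ℕ) (hp : 1 ≤ p) (w : Fin (2 * p) → Fin p)
    (htwice : ∀ l : Fin p, (Finset.univ.filter (fun i => w i = l)).card = 2)
    (hcross : ∃ a b c d : Fin (2 * p),
      a < b ∧ b < c ∧ c < d ∧ w a = w c ∧ w b = w d ∧ w a ≠ w b) :
    ‖(1 / 4 ^ p : ℂ) * ∑ X : Fin p → Fin 4,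
        (1 / 2 : ℂ) * Matrix.trace
          ((List.ofFn (fun i : Fin (2 * p) => pauli (X (w i)))).prod)‖ ≤ 1 / 4 := by
  classical
  obtain ⟨a, b, c, d, hab, hbc, hcd, hac, hbd, hne⟩ := hcross
  have hab' : (a : ℕ) < b := hab
  have hbc' : (b : ℕ) < c := hbc
  have hcd' : (c : ℕ) < d := hcd
  have hocc : ∀ (l : Fin p) (i j : Fin (2*p)), i ≠ j → w i = l → w j = l →
      ∀ k, w k = l → k = i ∨ k = j := by
    intro l i j hij hi hj k hk
    have hsub : ({i, j} : Finset (Fin (2*p))) ⊆ Finset.univ.filter (fun t => w t = l) := by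
      intro t ht
      simp only [Finset.mem_insert, Finset.mem_singleton] at ht
      rcases ht with rfl | rfl <;> simp [hi, hj]
    have heq := Finset.eq_of_subset_of_card_le hsub
      (le_of_eq ((htwice l).trans (Finset.card_pair hij).symm))
    have hmem : k ∈ ({i, j} : Finset (Fin (2*p))) := by
      rw [heq]; simp [hk]
    simpa using hmem
  have hoccl : ∀ k, w k = w a → k = a ∨ k = c :=
    hocc (w a) a c (ne_of_lt (lt_trans hab hbc)) rfl hac.symm
  have hoccm : ∀ k, w k = w b → k = b ∨ k = d :=
    hocc (w b) b d (ne_of_lt (lt_trans hbc hcd)) rfl hbd.symm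
  have hlm : w a ≠ w b := hne
  have hp2 : 2 ≤ p := by
    have h1 : (w a).val ≠ (w b).val := fun h => hlm (Fin.ext h)
    have h2 := (w a).isLt
    have h3 := (w b).isLt
    omega
  set f : (Fin p → Fin 4) → ℂ := fun X => (1 / 2 : ℂ) * Matrix.trace
    ((List.ofFn (fun i : Fin (2 * p) => pauli (X (w i)))).prod) with hf
  have hsum : (∑ X : Fin p → Fin 4, f X)
      = ∑ Z : { i : Fin p // i ≠ w a ∧ i ≠ w b } → Fin 4, ∑ x : Fin 4, ∑ y : Fin 4,
          f (gfun (w a) (w b) (x, y, Z)) := by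
    rw [← Equiv.sum_comp (gequiv (w a) (w b) hlm) f]
    rw [Fintype.sum_prod_type]
    simp only [Fintype.sum_prod_type]
    have h1 : (∑ x : Fin 4, ∑ y : Fin 4, ∑ Z : { i : Fin p // i ≠ w a ∧ i ≠ w b } → Fin 4,
          f (gfun (w a) (w b) (x, y, Z)))
        = ∑ x : Fin 4, ∑ Z : { i : Fin p // i ≠ w a ∧ i ≠ w b } → Fin 4, ∑ y : Fin 4,
          f (gfun (w a) (w b) (x, y, Z)) :=
      Finset.sum_congr rfl fun x _ => Finset.sum_comm
    have h2 : (∑ x : Fin 4, ∑ Z : { i : Fin p // i ≠ w a ∧ i ≠ w b } → Fin 4, ∑ y : Fin 4,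
          f (gfun (w a) (w b) (x, y, Z)))
        = ∑ Z : { i : Fin p // i ≠ w a ∧ i ≠ w b } → Fin 4, ∑ x : Fin 4, ∑ y : Fin 4,
          f (gfun (w a) (w b) (x, y, Z)) :=
      Finset.sum_comm
    rw [← h2, ← h1]
    rfl
  have hZbound : ∀ Z : { i : Fin p // i ≠ w a ∧ i ≠ w b } → Fin 4,
      ‖∑ x : Fin 4, ∑ y : Fin 4, f (gfun (w a) (w b) (x, y, Z))‖ ≤ 4 := by
    intro Z
    set L := List.ofFn w with hL
    have hlen : L.length = 2 * p := List.length_ofFn (f := w)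
    have hd' : (d : ℕ) < L.length := by rw [hlen]; exact d.isLt
    have hgetw : ∀ (i : ℕ) (hi : i < L.length), L[i] = w ⟨i, by rwa [hlen] at hi⟩ := by
      intro i hi
      simp [hL, List.getElem_ofFn]
    have hnotin : ∀ (i : ℕ) (hi : i < L.length),
        i ≠ (a:ℕ) → i ≠ (b:ℕ) → i ≠ (c:ℕ) → i ≠ (d:ℕ) → L[i] ≠ w a ∧ L[i] ≠ w b := by
      intro i hi hia hib hic hid
      rw [hgetw i hi]
      constructor
      · intro hvl
        rcases hoccl _ hvl with h | h
        · exact hia (congrArg Fin.val h)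
        · exact hic (congrArg Fin.val h)
      · intro hvl
        rcases hoccm _ hvl with h | h
        · exact hib (congrArg Fin.val h)
        · exact hid (congrArg Fin.val h)
    set T1 := L.take (a:ℕ) with hT1def
    set T2 := (L.drop ((a:ℕ)+1)).take ((b:ℕ) - ((a:ℕ)+1)) with hT2def
    set T3 := (L.drop ((b:ℕ)+1)).take ((c:ℕ) - ((b:ℕ)+1)) with hT3def
    set T4 := (L.drop ((c:ℕ)+1)).take ((d:ℕ) - ((c:ℕ)+1)) with hT4def
    set T5 := L.drop ((d:ℕ)+1) with hT5def
    have hsplit : L = T1 ++ L[(a:ℕ)]'(by omega) :: (T2 ++ L[(b:ℕ)]'(by omega) ::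
        (T3 ++ L[(c:ℕ)]'(by omega) :: (T4 ++ L[(d:ℕ)]'hd' :: T5))) :=
      slice_split L hab' hbc' hcd' hd'
    have hga : L[(a:ℕ)]'(by omega) = w a := by rw [hgetw]
    have hgb : L[(b:ℕ)]'(by omega) = w b := by rw [hgetw]
    have hgc : L[(c:ℕ)]'(by omega) = w c := by rw [hgetw]
    have hgd : L[(d:ℕ)]'hd' = w d := by rw [hgetw]
    have hT1 : ∀ v ∈ T1, v ≠ w a ∧ v ≠ w b := by
      intro v hv
      obtain ⟨i, hi, hik, hval⟩ := mem_take' hv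
      rw [← hval]
      exact hnotin i hi (by omega) (by omega) (by omega) (by omega)
    have hT2 : ∀ v ∈ T2, v ≠ w a ∧ v ≠ w b := by
      intro v hv
      obtain ⟨i, hi, hj1, hj2, hval⟩ := mem_slice hv
      rw [← hval]
      exact hnotin i hi (by omega) (by omega) (by omega) (by omega)
    have hT3 : ∀ v ∈ T3, v ≠ w a ∧ v ≠ w b := by
      intro v hv
      obtain ⟨i, hi, hj1, hj2, hval⟩ := mem_slice hv
      rw [← hval]
      exact hnotin i hi (by omega) (by omega) (by omega) (by omega)
    have hT4 : ∀ v ∈ T4, v ≠ w a ∧ v ≠ w b := by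
      intro v hv
      obtain ⟨i, hi, hj1, hj2, hval⟩ := mem_slice hv
      rw [← hval]
      exact hnotin i hi (by omega) (by omega) (by omega) (by omega)
    have hT5 : ∀ v ∈ T5, v ≠ w a ∧ v ≠ w b := by
      intro v hv
      obtain ⟨i, hi, hj1, hval⟩ := mem_drop' hv
      rw [← hval]
      exact hnotin i hi (by omega) (by omega) (by omega) (by omega)
    have hIsPmap : ∀ T : List (Fin p),
        IsP ((T.map (fun l => pauli (gfun (w a) (w b) (0, 0, Z) l))).prod) := by
      intro T
      apply IsP_prod
      intro M hM
      obtain ⟨l, _, rfl⟩ := List.mem_map.1 hM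
      exact IsP_pauli _
    have hmapT : ∀ (x y : Fin 4) (T : List (Fin p)), (∀ v ∈ T, v ≠ w a ∧ v ≠ w b) →
        T.map (fun l => pauli (gfun (w a) (w b) (x, y, Z) l))
          = T.map (fun l => pauli (gfun (w a) (w b) (0, 0, Z) l)) := by
      intro x y T hT
      apply List.map_congr_left
      intro l hl
      rw [gfun_other (x, y, Z) (0, 0, Z) rfl (hT l hl).1 (hT l hl).2]
    have hterm : ∀ x y : Fin 4, f (gfun (w a) (w b) (x, y, Z)) = (1 / 2 : ℂ) * Matrix.trace
        (((T1.map (fun l => pauli (gfun (w a) (w b) (0, 0, Z) l))).prod) * (pauli x *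
          (((T2.map (fun l => pauli (gfun (w a) (w b) (0, 0, Z) l))).prod) * (pauli y *
            (((T3.map (fun l => pauli (gfun (w a) (w b) (0, 0, Z) l))).prod) * (pauli x *
              (((T4.map (fun l => pauli (gfun (w a) (w b) (0, 0, Z) l))).prod) * (pauli y *
                ((T5.map (fun l => pauli (gfun (w a) (w b) (0, 0, Z) l))).prod))))))))) := by
      intro x y
      rw [hf]
      simp only
      congr 2
      have hmap0 : List.ofFn (fun i : Fin (2*p) => pauli (gfun (w a) (w b) (x, y, Z) (w i)))
          = L.map (fun l => pauli (gfun (w a) (w b) (x, y, Z) l)) := by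
        rw [hL, List.map_ofFn]
        rfl
      rw [hmap0]
      conv_lhs => rw [hsplit]
      rw [List.map_append, List.map_cons, List.map_append, List.map_cons,
        List.map_append, List.map_cons, List.map_append, List.map_cons]
      rw [List.prod_append, List.prod_cons, List.prod_append, List.prod_cons,
        List.prod_append, List.prod_cons, List.prod_append, List.prod_cons]
      rw [hmapT x y T1 hT1, hmapT x y T2 hT2, hmapT x y T3 hT3, hmapT x y T4 hT4,
        hmapT x y T5 hT5]
      rw [hga, hgb, hgc, hgd, ← hac, ← hbd]
      rw [gfun_fst, gfun_snd hlm]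
    simp only [hterm]
    exact inner_bound _ _ _ _ _ (hIsPmap T1) (hIsPmap T2) (hIsPmap T3) (hIsPmap T4) (hIsPmap T5)
  have hcard : Fintype.card ({ i : Fin p // i ≠ w a ∧ i ≠ w b } → Fin 4) = 4 ^ (p - 2) := by
    rw [Fintype.card_fun, Fintype.card_fin]
    congr 1
    rw [Fintype.card_subtype]
    have hfe : (Finset.univ.filter fun i : Fin p => i ≠ w a ∧ i ≠ w b)
        = Finset.univ \ {w a, w b} := by
      ext i
      simp [not_or]
    rw [hfe, Finset.card_sdiff_of_subset (by simp), Finset.card_univ, Fintype.card_fin,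
      Finset.card_insert_of_notMem (by simp [hlm]), Finset.card_singleton]
  rw [hsum, norm_mul]
  have habs1 : ‖(1 / 4 ^ p : ℂ)‖ = 1 / 4 ^ p := by
    rw [norm_div, norm_one, norm_pow]
    norm_num
  rw [habs1]
  have hsumabs : ‖∑ Z : { i : Fin p // i ≠ w a ∧ i ≠ w b } → Fin 4,
        ∑ x : Fin 4, ∑ y : Fin 4, f (gfun (w a) (w b) (x, y, Z))‖
      ≤ 4 ^ (p - 2) * 4 := by
    refine le_trans (norm_sum_le _ _) ?_
    refine le_trans (Finset.sum_le_sum fun Z _ => hZbound Z) ?_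
    rw [Finset.sum_const, Finset.card_univ, hcard, nsmul_eq_mul]
    push_cast
    norm_num
  calc (1 / 4 ^ p : ℝ) * ‖∑ Z : { i : Fin p // i ≠ w a ∧ i ≠ w b } → Fin 4,
        ∑ x : Fin 4, ∑ y : Fin 4, f (gfun (w a) (w b) (x, y, Z))‖
      ≤ (1 / 4 ^ p : ℝ) * (4 ^ (p - 2) * 4) := by
        apply mul_le_mul_of_nonneg_left hsumabs
        positivity
    _ = 1 / 4 := by
        have h4 : (4:ℝ) ^ p = 4 ^ (p - 2) * 4 * 4 := by
          rw [← pow_succ, ← pow_succ]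
          congr 1
          omega
        rw [h4]
        have hpos : (0:ℝ) < 4 ^ (p - 2) := by positivity
        field_simp
end
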